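/- Let (X, ‖·‖) be a finite-dimensional normed space, K ⊆ X a convex body, and x ∉ K with metric projection p_K(x). Then p_K(x) is a metric projection onto K of every point on the ray {p_K(x) + t(x - p_K(x)) : t ≥ 0}. (K is a 'sun'.) -/
import Mathlib


/-- A convex body in a finite-dimensional normed space is a *sun*: if
`p` is a metric projection of `x ∉ K` onto `K`, then `p` is a metric projection onto `K`
of every point of the ray `{p + t • (x - p) : t ≥ 0}`. -/
theorem convex_body_is_sun
    {E : Type*} [NormedAddCommGroup E] [NormedSpace ℝ E] [FiniteDimensional ℝ E]
    (K : Set E) (hKconv : Convex ℝ K) (hKcomp : IsCompact K)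
    (hKint : (interior K).Nonempty) (x : E) (hx : x ∉ K)
    (p : E) (hp : p ∈ K) (hproj : ‖x - p‖ = Metric.infDist x K) :
    ∀ t : ℝ, 0 ≤ t →
      Metric.infDist (p + t • (x - p)) K = ‖(p + t • (x - p)) - p‖ := by
  intro t ht
  set y := p + t • (x - p) with hy
  have hyp : ‖y - p‖ = t * ‖x - p‖ := by
    simp [hy, norm_smul, abs_of_nonneg ht]
  have hxK : ∀ q ∈ K, ‖x - p‖ ≤ ‖x - q‖ := by
    intro q hq
    rw [hproj]
    simpa [dist_eq_norm] using Metric.infDist_le_dist_of_mem hq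
  refine le_antisymm ?_ ?_
  · simpa [dist_eq_norm] using Metric.infDist_le_dist_of_mem hp
  · by_contra hlt
    push_neg at hlt
    obtain ⟨q, hq, hdq⟩ := (Metric.infDist_lt_iff ⟨p, hp⟩).mp hlt
    refine absurd hdq (not_lt.mpr ?_)
    rw [dist_eq_norm, hyp]
    rcases le_or_gt t 1 with h1 | h1
    · have hxy : ‖x - y‖ = (1 - t) * ‖x - p‖ := by
        have : x - y = (1 - t) • (x - p) := by rw [hy]; module
        rw [this, norm_smul, Real.norm_eq_abs, abs_of_nonneg (by linarith)]
      have h2 : ‖x - q‖ ≤ ‖x - y‖ + ‖y - q‖ := by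
        simpa using norm_sub_le_norm_sub_add_norm_sub x y q
      have h3 := hxK q hq
      linarith [hxy ▸ h2]
    · have ht0 : (0:ℝ) < t := by linarith
      have hmem : (1 - t⁻¹) • p + t⁻¹ • q ∈ K := by
        refine hKconv hp hq ?_ ?_ (by ring)
        · linarith [inv_le_one_of_one_le₀ (le_of_lt h1)]
        · positivity
      have hkey : x - ((1 - t⁻¹) • p + t⁻¹ • q) = t⁻¹ • (y - q) := by
        rw [hy]
        match_scalars <;> field_simp <;> ring
      have h4 := hxK _ hmem
      rw [hkey, norm_smul, Real.norm_eq_abs, abs_of_pos (by positivity)] at h4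
      calc t * ‖x - p‖ ≤ t * (t⁻¹ * ‖y - q‖) := by
            exact mul_le_mul_of_nonneg_left h4 ht
        _ = ‖y - q‖ := by field_simp
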